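/- Suppose v_1, …, v_k span ℝ^n (equivalently ker(φ) = 0). Let c ∈ ℤ^k with S̃_c ≠ ∅, let u ∈ S̃_c, let p = π(c), and let F_p be the minimal face of Z containing p. Then dim span(F_p − p) + dim span(S̃_c − u) = k − |J_c|, where dim denotes Module.finrank over ℝ. -/

import Mathlib

/-- The linear map `φ : ℝⁿ → ℝᵏ` given by pairing with the integer vectors `v j`. -/
noncomputable def phiMap {n k : ℕ} (v : Fin k → Fin n → ℤ) :
    (Fin n → ℝ) →ₗ[ℝ] (Fin k → ℝ) where
  toFun u := fun j => ∑ i, u i * (v j i : ℝ)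
  map_add' u w := by
    funext j
    simp [add_mul, Finset.sum_add_distrib]
  map_smul' r u := by
    funext j
    simp [Finset.mul_sum, mul_assoc]

/-- The map `Φ : ℝⁿ → ℤᵏ`, `Φ(u)_j = ⌈⟨u, v_j⟩⌉`. -/
noncomputable def PhiMap {n k : ℕ} (v : Fin k → Fin n → ℤ) (u : Fin n → ℝ) : Fin k → ℤ :=
  fun j => ⌈∑ i, u i * (v j i : ℝ)⌉

open Module

/-- coordinate-vanishing submodule -/
def coordZero {k : ℕ} (J : Set (Fin k)) : Submodule ℝ (Fin k → ℝ) where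
  carrier := {x | ∀ j ∈ J, x j = 0}
  add_mem' := by
    intro a b ha hb j hj
    simp only [Pi.add_apply, ha j hj, hb j hj, add_zero]
  zero_mem' := by intro j _; rfl
  smul_mem' := by
    intro r x hx j hj
    simp only [Pi.smul_apply, hx j hj, smul_zero]

lemma mem_coordZero_iff {k : ℕ} {J : Set (Fin k)} {x : Fin k → ℝ} :
    x ∈ coordZero J ↔ ∀ j ∈ J, x j = 0 := Iff.rfl

lemma coordZero_eq_span {k : ℕ} (J : Set (Fin k)) :
    coordZero J
      = Submodule.span ℝ (Set.range fun j : ↥(Jᶜ) => (Pi.single (j : Fin k) (1:ℝ))) := by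
  classical
  apply le_antisymm
  · intro x hx
    have hx' : ∀ j ∈ J, x j = 0 := hx
    have hrepr : x = ∑ j : Fin k, Pi.single j (x j) := (Finset.univ_sum_single x).symm
    rw [hrepr]
    apply Submodule.sum_mem
    intro j _
    by_cases hj : j ∈ J
    · simp [hx' j hj]
    · have hsingle : Pi.single j (x j) = (x j) • (Pi.single j (1:ℝ) : Fin k → ℝ) := by
        ext i
        by_cases h : i = j <;> simp [Pi.single_apply, h]
      rw [hsingle]
      exact Submodule.smul_mem _ _ (Submodule.subset_span ⟨⟨j, hj⟩, rfl⟩)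
  · rw [Submodule.span_le]
    rintro _ ⟨⟨j, hj⟩, rfl⟩
    intro i hi
    have hij : i ≠ j := fun h => hj (h ▸ hi)
    simp [Pi.single_apply, hij]

lemma span_sub_eq {E : Type*} [AddCommGroup E] [Module ℝ E] {S : Set E} {a b : E}
    (ha : a ∈ S) (hb : b ∈ S) :
    Submodule.span ℝ ((fun s => s - a) '' S) = Submodule.span ℝ ((fun s => s - b) '' S) := by
  have key : ∀ x y : E, x ∈ S → y ∈ S →
      Submodule.span ℝ ((fun s => s - x) '' S) ≤ Submodule.span ℝ ((fun s => s - y) '' S) := by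
    intro x y hx _
    rw [Submodule.span_le]
    rintro _ ⟨s, hs, rfl⟩
    have h1 : s - y ∈ Submodule.span ℝ ((fun s => s - y) '' S) :=
      Submodule.subset_span ⟨s, hs, rfl⟩
    have h2 : x - y ∈ Submodule.span ℝ ((fun s => s - y) '' S) :=
      Submodule.subset_span ⟨x, hx, rfl⟩
    have hxy : s - x = (s - y) - (x - y) := by abel
    show s - x ∈ _
    rw [hxy]
    exact Submodule.sub_mem _ h1 h2
  exact le_antisymm (key a b ha hb) (key b a hb ha)

set_option maxHeartbeats 1000000 in
/-- If `v_1, …, v_k` span `ℝⁿ`, then `dim F_p + dim S = k − |J_c|`, where `F_p` is the minimal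
face of the half-open zonotope `Z` containing `p = π(c)` and `S̃_c` is the lifted stratum
containing `u`. -/
theorem stmt15 {n k : ℕ} (v : Fin k → Fin n → ℤ)
    (hspan : Submodule.span ℝ (Set.range fun j => fun i => ((v j i : ℝ))) = ⊤)
    (c : Fin k → ℤ) (hc : ({y : Fin n → ℝ | PhiMap v y = c}).Nonempty)
    (u : Fin n → ℝ) (hu : PhiMap v u = c) :
    let π := (LinearMap.range (phiMap v)).mkQ
    let Z := π '' {x : Fin k → ℝ | ∀ j, x j ∈ Set.Ico (0 : ℝ) 1}
    let p := π (fun j => (c j : ℝ))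
    let Fp := ⋂₀ {F : Set ((Fin k → ℝ) ⧸ LinearMap.range (phiMap v)) |
      IsExtreme ℝ Z F ∧ p ∈ F}
    let J : Set (Fin k) :=
      {j | ∀ y ∈ {y : Fin n → ℝ | PhiMap v y = c}, ∃ m : ℤ, phiMap v y j = (m : ℝ)}
    Module.finrank ℝ ↥(Submodule.span ℝ ((fun x => x - p) '' Fp)) +
      Module.finrank ℝ
        ↥(Submodule.span ℝ ((fun s => s - u) '' {y : Fin n → ℝ | PhiMap v y = c})) =
    k - J.ncard := by
  classical
  intro π Z p Fp J
  -- basic defeq facts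
  have hπ : π = (LinearMap.range (phiMap v)).mkQ := rfl
  have hJdef : ∀ j : Fin k, j ∈ J ↔
      (∀ y : Fin n → ℝ, PhiMap v y = c → ∃ m : ℤ, phiMap v y j = (m : ℝ)) := fun j => Iff.rfl
  -- injectivity of φ
  have hinj : Function.Injective (phiMap v) := by
    rw [← LinearMap.ker_eq_bot, LinearMap.ker_eq_bot']
    intro y hy
    set ℓ : (Fin n → ℝ) →ₗ[ℝ] ℝ := ∑ i, y i • (LinearMap.proj i) with hℓ
    have hℓapp : ∀ w : Fin n → ℝ, ℓ w = ∑ i, y i * w i := by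
      intro w
      simp [hℓ, LinearMap.sum_apply, LinearMap.proj_apply]
    have hℓv : ∀ j, ℓ (fun i => (v j i : ℝ)) = 0 := by
      intro j
      have := congrFun hy j
      simpa [phiMap, hℓapp] using this
    have htop : (⊤ : Submodule ℝ (Fin n → ℝ)) ≤ LinearMap.ker ℓ := by
      rw [← hspan, Submodule.span_le]
      rintro _ ⟨j, rfl⟩
      exact LinearMap.mem_ker.mpr (hℓv j)
    have hℓy : ℓ y = 0 := LinearMap.mem_ker.mp (htop trivial)
    rw [hℓapp] at hℓy
    funext i
    have hsq : ∀ i ∈ Finset.univ, (0:ℝ) ≤ y i * y i := fun i _ => mul_self_nonneg _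
    have := (Finset.sum_eq_zero_iff_of_nonneg hsq).mp hℓy i (Finset.mem_univ i)
    have := mul_self_eq_zero.mp this
    simpa using this
  -- membership in the stratum via inequalities
  have hS_iff : ∀ y : Fin n → ℝ, PhiMap v y = c ↔
      ∀ j, ((c j : ℝ) - 1 < phiMap v y j ∧ phiMap v y j ≤ (c j : ℝ)) := by
    intro y
    rw [funext_iff]
    exact forall_congr' fun j => Int.ceil_eq_iff
  -- J coordinates are pinned at c j
  have hJc : ∀ j ∈ J, ∀ y : Fin n → ℝ, PhiMap v y = c → phiMap v y j = (c j : ℝ) := by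
    intro j hj y hy
    obtain ⟨m, hm⟩ := (hJdef j).mp hj y hy
    have h2 := (hS_iff y).mp hy j
    have h3 : (c j : ℝ) - 1 < (m : ℝ) := hm ▸ h2.1
    have h4 : (m : ℝ) ≤ (c j : ℝ) := hm ▸ h2.2
    have h3' : c j - 1 < m := by exact_mod_cast h3
    have h4' : m ≤ c j := by exact_mod_cast h4
    have : m = c j := by omega
    rw [hm, this]
  -- pick witnesses for non-J coordinates
  have hpick : ∀ j : Fin k, ∃ y : Fin n → ℝ, PhiMap v y = c ∧
      (j ∉ J → ∀ m : ℤ, phiMap v y j ≠ (m : ℝ)) := by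
    intro j
    by_cases hj : j ∈ J
    · exact ⟨u, hu, fun h => absurd hj h⟩
    · have h := hj
      rw [hJdef] at h
      push_neg at h
      obtain ⟨y, hy1, hy2⟩ := h
      exact ⟨y, hy1, fun _ => hy2⟩
  choose g hgS hgj using hpick
  have hπφ : ∀ y : Fin n → ℝ, π (phiMap v y) = 0 := by
    intro y
    rw [hπ, Submodule.mkQ_apply]
    exact (Submodule.Quotient.mk_eq_zero _).mpr ⟨y, rfl⟩
  ------------------------------------------------------------------
  -- PART A : the stratum span equals comap φ (coordZero J)
  ------------------------------------------------------------------
  have hspanS : Submodule.span ℝ ((fun s => s - u) '' {y : Fin n → ℝ | PhiMap v y = c})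
      = Submodule.comap (phiMap v) (coordZero J) := by
    set K : Finset (Fin k) := Finset.univ.filter (· ∉ J) with hKdef
    have hKmem : ∀ j : Fin k, j ∈ K ↔ j ∉ J := by
      intro j; simp [hKdef]
    apply le_antisymm
    · rw [Submodule.span_le]
      rintro _ ⟨y, hy, rfl⟩
      show phiMap v (y - u) ∈ coordZero J
      intro j hj
      rw [map_sub]
      show phiMap v y j - phiMap v u j = 0
      rw [hJc j hj y hy, hJc j hj u hu, sub_self]
    · by_cases hK : K.Nonempty
      · -- build an interior point u₀
        set N : ℝ := (K.card : ℝ) with hN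
        have hN0 : (0:ℝ) < N := by
          rw [hN]
          exact_mod_cast Finset.card_pos.mpr hK
        set u₀ : Fin n → ℝ := N⁻¹ • ∑ j ∈ K, g j with hu₀
        have hval : ∀ i, phiMap v u₀ i = (∑ j ∈ K, phiMap v (g j) i) / N := by
          intro i
          rw [hu₀, map_smul, map_sum]
          simp [Finset.sum_apply, div_eq_inv_mul]
        have hgb : ∀ j, ∀ i, (c i : ℝ) - 1 < phiMap v (g j) i ∧ phiMap v (g j) i ≤ (c i : ℝ) :=
          fun j => (hS_iff (g j)).mp (hgS j)
        have hlow : ∀ i, (c i : ℝ) - 1 < phiMap v u₀ i := by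
          intro i
          rw [hval, lt_div_iff₀ hN0]
          calc ((c i : ℝ) - 1) * N = ∑ _j ∈ K, ((c i : ℝ) - 1) := by
                rw [Finset.sum_const, nsmul_eq_mul, hN]; ring
            _ < ∑ j ∈ K, phiMap v (g j) i :=
                Finset.sum_lt_sum_of_nonempty hK (fun j _ => (hgb j i).1)
        have hupp : ∀ i, phiMap v u₀ i ≤ (c i : ℝ) := by
          intro i
          rw [hval, div_le_iff₀ hN0]
          calc ∑ j ∈ K, phiMap v (g j) i ≤ ∑ _j ∈ K, (c i : ℝ) :=
                Finset.sum_le_sum (fun j _ => (hgb j i).2)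
            _ = (c i : ℝ) * N := by rw [Finset.sum_const, nsmul_eq_mul, hN]; ring
        have hu₀S : PhiMap v u₀ = c := (hS_iff u₀).mpr (fun i => ⟨hlow i, hupp i⟩)
        have hlt : ∀ i ∈ K, phiMap v u₀ i < (c i : ℝ) := by
          intro i hi
          rw [hval, div_lt_iff₀ hN0]
          have hstrict : phiMap v (g i) i < (c i : ℝ) := by
            rcases lt_or_eq_of_le (hgb i i).2 with h | h
            · exact h
            · exact absurd h (hgj i ((hKmem i).mp hi) (c i))
          calc ∑ j ∈ K, phiMap v (g j) i < ∑ _j ∈ K, (c i : ℝ) :=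
                Finset.sum_lt_sum (fun j _ => (hgb j i).2) ⟨i, hi, hstrict⟩
            _ = (c i : ℝ) * N := by rw [Finset.sum_const, nsmul_eq_mul, hN]; ring
        -- switch basepoint
        have huS : u ∈ {y : Fin n → ℝ | PhiMap v y = c} := hu
        have hu₀S' : u₀ ∈ {y : Fin n → ℝ | PhiMap v y = c} := hu₀S
        rw [span_sub_eq huS hu₀S']
        intro d hd
        have hd' : ∀ j ∈ J, phiMap v d j = 0 := hd
        -- choose step size
        obtain ⟨j₀, hj₀⟩ := hK
        set δ : ℝ := K.inf' ⟨j₀, hj₀⟩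
          (fun i => min ((c i:ℝ) - phiMap v u₀ i) (phiMap v u₀ i - ((c i:ℝ) - 1))) with hδdef
        have hδ : 0 < δ := by
          rw [hδdef]
          refine (Finset.lt_inf'_iff _).2 ?_
          intro i hi
          exact lt_min (by linarith [hlt i hi]) (by linarith [hlow i])
        set M : ℝ := K.sup' ⟨j₀, hj₀⟩ (fun i => |phiMap v d i|) with hMdef
        have hM0 : 0 ≤ M := by
          rw [hMdef]
          exact le_trans (abs_nonneg (phiMap v d j₀)) (Finset.le_sup' (fun i => |phiMap v d i|) hj₀)
        set t : ℝ := δ / (2 * (M + 1)) with htdef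
        have ht : 0 < t := div_pos hδ (by nlinarith)
        have hkey : ∀ i ∈ K, |t * phiMap v d i| < δ := by
          intro i hi
          rw [abs_mul, abs_of_pos ht]
          have h1 : |phiMap v d i| ≤ M := by
            rw [hMdef]
            exact Finset.le_sup' (fun i => |phiMap v d i|) hi
          have h2 : t * |phiMap v d i| ≤ t * M :=
            mul_le_mul_of_nonneg_left h1 ht.le
          have h3 : t * M < δ := by
            rw [htdef, div_mul_eq_mul_div, div_lt_iff₀ (by nlinarith : (0:ℝ) < 2*(M+1))]
            nlinarith
          linarith
        have hδle : ∀ i ∈ K, δ ≤ (c i:ℝ) - phiMap v u₀ i ∧ δ ≤ phiMap v u₀ i - ((c i:ℝ) - 1) := by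
          intro i hi
          constructor
          · rw [hδdef]
            exact le_trans (Finset.inf'_le _ hi) (min_le_left _ _)
          · rw [hδdef]
            exact le_trans (Finset.inf'_le _ hi) (min_le_right _ _)
        have hy₁ : PhiMap v (u₀ + t • d) = c := by
          rw [hS_iff]
          intro i
          have happ : phiMap v (u₀ + t • d) i = phiMap v u₀ i + t * phiMap v d i := by
            rw [map_add, map_smul]
            simp
          rw [happ]
          by_cases hi : i ∈ K
          · have hk := hkey i hi
            have hd1 := (hδle i hi).1
            have hd2 := (hδle i hi).2
            have ha1 := le_abs_self (t * phiMap v d i)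
            have ha2 := neg_abs_le (t * phiMap v d i)
            constructor <;> [linarith; linarith]
          · have hiJ : i ∈ J := by
              by_contra h
              exact hi ((hKmem i).mpr h)
            rw [hd' i hiJ, mul_zero, add_zero]
            exact (hS_iff u₀).mp hu₀S i
        have hmem : (u₀ + t • d) - u₀ ∈
            Submodule.span ℝ ((fun s => s - u₀) '' {y : Fin n → ℝ | PhiMap v y = c}) :=
          Submodule.subset_span ⟨u₀ + t • d, hy₁, rfl⟩
        have heq : d = t⁻¹ • ((u₀ + t • d) - u₀) := by
          rw [add_sub_cancel_left, smul_smul, inv_mul_cancel₀ ht.ne', one_smul]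
        rw [heq]
        exact Submodule.smul_mem _ _ hmem
      · -- J is everything, so the comap is trivial
        intro d hd
        have hall : ∀ j : Fin k, j ∈ J := by
          intro j
          by_contra h
          exact hK ⟨j, (hKmem j).mpr h⟩
        have hd' : ∀ j ∈ J, phiMap v d j = 0 := hd
        have : phiMap v d = 0 := funext fun j => hd' j (hall j)
        have hd0 : d = 0 := hinj (by rw [this, map_zero])
        rw [hd0]
        exact Submodule.zero_mem _
  ------------------------------------------------------------------
  -- PART B : the face span equals map π (coordZero J)
  ------------------------------------------------------------------
  have hspanF : Submodule.span ℝ ((fun x => x - p) '' Fp)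
      = Submodule.map π (coordZero J) := by
    set cR : Fin k → ℝ := fun j => (c j : ℝ) with hcRdef
    have hp : p = π cR := rfl
    -- representatives of p in the half-open cube
    have hrep : ∀ x : Fin k → ℝ, (∀ j, x j ∈ Set.Ico (0:ℝ) 1) → π x = p →
        ∃ y : Fin n → ℝ, PhiMap v y = c ∧ x = cR - phiMap v y := by
      intro x hxC hxp
      have h0 : π (x - cR) = 0 := by rw [map_sub, hxp, hp, sub_self]
      have hmem : x - cR ∈ LinearMap.range (phiMap v) := by
        have := LinearMap.mem_ker.mpr h0
        rwa [hπ, Submodule.ker_mkQ] at this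
      obtain ⟨w, hw⟩ := hmem
      have hφw : phiMap v (-w) = cR - x := by rw [map_neg, hw, neg_sub]
      refine ⟨-w, ?_, ?_⟩
      · rw [hS_iff]
        intro j
        have hφj : phiMap v (-w) j = (c j : ℝ) - x j := by
          rw [hφw]
          show cR j - x j = (c j : ℝ) - x j
          rfl
        obtain ⟨h1, h2⟩ := hxC j
        rw [hφj]
        constructor <;> linarith
      · rw [hφw, sub_sub_cancel]
    have hJzero : ∀ x : Fin k → ℝ, (∀ j, x j ∈ Set.Ico (0:ℝ) 1) → π x = p →
        ∀ j ∈ J, x j = 0 := by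
      intro x hxC hxp j hj
      obtain ⟨y, hyS, rfl⟩ := hrep x hxC hxp
      show cR j - phiMap v y j = 0
      rw [hJc j hj y hyS]
      show (c j : ℝ) - (c j : ℝ) = 0
      ring
    -- convexity of the cube
    have hCconv : ∀ (s t : Fin k → ℝ), (∀ j, s j ∈ Set.Ico (0:ℝ) 1) →
        (∀ j, t j ∈ Set.Ico (0:ℝ) 1) →
        ∀ α β : ℝ, 0 < α → 0 < β → α + β = 1 →
        (∀ j, (α • s + β • t) j ∈ Set.Ico (0:ℝ) 1) := by
      intro s t hs ht α β hα hβ hαβ j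
      obtain ⟨h1a, h1b⟩ := hs j
      obtain ⟨h2a, h2b⟩ := ht j
      simp only [Set.mem_Ico, Pi.add_apply, Pi.smul_apply, smul_eq_mul]
      constructor
      · nlinarith
      · nlinarith
    -- base representative of p
    have hub := (hS_iff u).mp hu
    have hx₀C : ∀ j, (cR - phiMap v u) j ∈ Set.Ico (0:ℝ) 1 := by
      intro j
      obtain ⟨h1, h2⟩ := hub j
      simp only [Set.mem_Ico, Pi.sub_apply]
      constructor
      · linarith
      · linarith
    have hπx₀ : π (cR - phiMap v u) = p := by
      rw [map_sub, hπφ, sub_zero]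
    -- the extreme set F₀
    set F₀ : Set ((Fin k → ℝ) ⧸ LinearMap.range (phiMap v)) :=
      Z ∩ {z | ∀ x : Fin k → ℝ, (∀ j, x j ∈ Set.Ico (0:ℝ) 1) → π x = z → ∀ j ∈ J, x j = 0}
      with hF₀def
    have hpZ : p ∈ Z := ⟨cR - phiMap v u, hx₀C, hπx₀⟩
    have hpF₀ : p ∈ F₀ := ⟨hpZ, fun x hxC hxp => hJzero x hxC hxp⟩
    have hF₀ext : IsExtreme ℝ Z F₀ := by
      constructor
      · exact Set.inter_subset_left
      · rintro a ⟨s, hsC, rfl⟩ b ⟨t, htC, rfl⟩ z hz hseg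
        obtain ⟨α, β, hα, hβ, hαβ, hcomb⟩ := hseg
        · refine ⟨⟨s, hsC, rfl⟩, ?_⟩
          intro s' hs'C hπs' j hj
          have hwC := hCconv s' t hs'C htC α β hα hβ hαβ
          have hπw : π (α • s' + β • t) = z := by
            rw [map_add, map_smul, map_smul, hπs', hcomb]
          have hw0 : α * s' j + β * t j = 0 := hz.2 _ hwC hπw j hj
          have h1 := (hs'C j).1
          have h2 := (htC j).1
          nlinarith
    have hFple : Fp ⊆ F₀ := Set.sInter_subset_of_mem ⟨hF₀ext, hpF₀⟩
    apply le_antisymm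
    · rw [Submodule.span_le]
      rintro _ ⟨z, hzFp, rfl⟩
      have hz := hFple hzFp
      obtain ⟨x, hxC, hπx⟩ := hz.1
      have hxJ : ∀ j ∈ J, x j = 0 := hz.2 x hxC hπx
      show z - p ∈ Submodule.map π (coordZero J)
      refine Submodule.mem_map.mpr ⟨x - (cR - phiMap v u), ?_, ?_⟩
      · intro j hj
        show x j - (cR - phiMap v u) j = 0
        rw [hxJ j hj, hJzero (cR - phiMap v u) hx₀C hπx₀ j hj, sub_zero]
      · rw [map_sub, hπx, hπx₀]
    · rw [coordZero_eq_span, Submodule.map_span, Submodule.span_le]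
      rintro _ ⟨_, ⟨⟨j, hj⟩, rfl⟩, rfl⟩
      have hjJ : j ∉ J := hj
      have hyb := (hS_iff (g j)).mp (hgS j)
      set x₁ : Fin k → ℝ := cR - phiMap v (g j) with hx₁def
      have hx₁C : ∀ i, x₁ i ∈ Set.Ico (0:ℝ) 1 := by
        intro i
        obtain ⟨h1, h2⟩ := hyb i
        simp only [hx₁def, Set.mem_Ico, Pi.sub_apply]
        constructor
        · linarith
        · linarith
      have hπx₁ : π x₁ = p := by
        rw [hx₁def, map_sub, hπφ, sub_zero]
      have hx₁j0 : 0 < x₁ j := by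
        rcases lt_or_eq_of_le (hx₁C j).1 with h | h
        · exact h
        · exfalso
          have hxx : phiMap v (g j) j = ((c j : ℤ) : ℝ) := by
            have h' : (0:ℝ) = (c j : ℝ) - phiMap v (g j) j := h
            linarith
          exact hgj j hjJ (c j) hxx
      have hx₁j1 : x₁ j < 1 := (hx₁C j).2
      set ε : ℝ := min (x₁ j) ((1 - x₁ j)/2) with hεdef
      have hε : 0 < ε := lt_min hx₁j0 (by linarith)
      have hε1 : ε ≤ x₁ j := min_le_left _ _
      have hε2 : ε ≤ (1 - x₁ j)/2 := min_le_right _ _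
      set e : Fin k → ℝ := Pi.single j 1 with hedef
      have hej : e j = 1 := Pi.single_eq_same j 1
      have haZ : p - ε • π e ∈ Z := by
        refine ⟨x₁ - ε • e, ?_, ?_⟩
        · intro i
          by_cases hij : i = j
          · subst hij
            simp only [Set.mem_Ico, Pi.sub_apply, Pi.smul_apply, smul_eq_mul, hej, mul_one]
            constructor
            · linarith
            · linarith
          · have hei : e i = 0 := Pi.single_eq_of_ne hij 1
            simp only [Set.mem_Ico, Pi.sub_apply, Pi.smul_apply, smul_eq_mul, hei,
              mul_zero, sub_zero]
            rw [← Set.mem_Ico]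
            exact hx₁C i
        · rw [map_sub, map_smul, hπx₁]
      have hbZ : p + ε • π e ∈ Z := by
        refine ⟨x₁ + ε • e, ?_, ?_⟩
        · intro i
          by_cases hij : i = j
          · subst hij
            simp only [Set.mem_Ico, Pi.add_apply, Pi.smul_apply, smul_eq_mul, hej, mul_one]
            constructor
            · linarith
            · linarith
          · have hei : e i = 0 := Pi.single_eq_of_ne hij 1
            simp only [Set.mem_Ico, Pi.add_apply, Pi.smul_apply, smul_eq_mul, hei,
              mul_zero, add_zero]
            rw [← Set.mem_Ico]
            exact hx₁C i
        · rw [map_add, map_smul, hπx₁]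
      have hseg : p ∈ openSegment ℝ (p - ε • π e) (p + ε • π e) := by
        refine ⟨1/2, 1/2, by norm_num, by norm_num, by norm_num, ?_⟩
        module
      have hbFp : p + ε • π e ∈ Fp := by
        apply Set.mem_sInter.mpr
        intro F hF
        exact hF.1.2 hbZ haZ hF.2 (by rw [openSegment_symm]; exact hseg)
      have h1 : (p + ε • π e) - p ∈ Submodule.span ℝ ((fun x => x - p) '' Fp) :=
        Submodule.subset_span ⟨_, hbFp, rfl⟩
      have h2 : (p + ε • π e) - p = ε • π e := add_sub_cancel_left p _
      rw [h2] at h1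
      show π e ∈ Submodule.span ℝ ((fun x => x - p) '' Fp)
      have h3 : π e = ε⁻¹ • (ε • π e) := by
        rw [smul_smul, inv_mul_cancel₀ hε.ne', one_smul]
      rw [h3]
      exact Submodule.smul_mem _ _ h1
  ------------------------------------------------------------------
  -- PART C : rank arithmetic
  ------------------------------------------------------------------
  rw [hspanS, hspanF]
  set UU := coordZero J with hUU
  set f : ↥UU →ₗ[ℝ] (Fin k → ℝ) ⧸ LinearMap.range (phiMap v) := π.comp UU.subtype with hf
  have h1 : finrank ℝ ↥(LinearMap.range f) + finrank ℝ ↥(LinearMap.ker f) = finrank ℝ ↥UU :=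
    LinearMap.finrank_range_add_finrank_ker f
  have hrange : LinearMap.range f = Submodule.map π UU := by
    rw [hf, LinearMap.range_comp, Submodule.range_subtype]
  have hker : LinearMap.ker f
      = Submodule.comap UU.subtype (LinearMap.range (phiMap v) ⊓ UU) := by
    rw [hf, LinearMap.ker_comp, hπ, Submodule.ker_mkQ]
    ext ⟨x, hx⟩
    simp [Submodule.mem_comap, Submodule.mem_inf, hx]
  have hkerrank : finrank ℝ ↥(LinearMap.ker f)
      = finrank ℝ ↥(LinearMap.range (phiMap v) ⊓ UU) := by
    rw [hker]
    exact (Submodule.comapSubtypeEquivOfLe inf_le_right).finrank_eq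
  have hWrank : finrank ℝ ↥(Submodule.comap (phiMap v) UU)
      = finrank ℝ ↥(LinearMap.range (phiMap v) ⊓ UU) := by
    rw [← Submodule.map_comap_eq (phiMap v) UU]
    exact (Submodule.equivMapOfInjective (phiMap v) hinj _).finrank_eq
  have hsum : finrank ℝ ↥(Submodule.map π UU) + finrank ℝ ↥(Submodule.comap (phiMap v) UU)
      = finrank ℝ ↥UU := by
    rw [hWrank, ← hkerrank, ← hrange]
    exact h1
  rw [hsum]
  -- now finrank UU = k - J.ncard
  have hli : LinearIndependent ℝ (fun j : ↥(Jᶜ) => (Pi.single (j : Fin k) (1:ℝ) : Fin k → ℝ)) := by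
    have h := (Pi.basisFun ℝ (Fin k)).linearIndependent
    have h2 := h.comp (Subtype.val : ↥(Jᶜ) → Fin k) Subtype.val_injective
    have heq : (fun j : ↥(Jᶜ) => (Pi.single (j : Fin k) (1:ℝ) : Fin k → ℝ))
        = (⇑(Pi.basisFun ℝ (Fin k)) ∘ (Subtype.val : ↥(Jᶜ) → Fin k)) := by
      funext j
      simp [Function.comp, Pi.basisFun_apply]
    rw [heq]
    exact h2
  rw [hUU, coordZero_eq_span, finrank_span_eq_card hli]
  have hcard : J.ncard = Fintype.card ↥J := by
    rw [Set.ncard_eq_toFinset_card', Set.toFinset_card]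
  rw [hcard, Fintype.card_compl_set, Fintype.card_fin]
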